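/- Let U ⊆ ℝ^N be open, α a smooth 1-form on U, Z a smooth vector field on U with dα(x)(Z(x), v) = 0 for all x ∈ U, v ∈ ℝ^N, β a closed smooth 1-form on U, f : U → ℝ smooth, and ζ a smooth vector field with L_ζ(α + β) = df. Then the Lie bracket [ζ, Z] lies in the kernel of dα at every point: dα(x)([ζ,Z](x), v) = 0 for all x ∈ U and all v ∈ ℝ^N. -/

import Mathlib

noncomputable section
open scoped ContDiff

/-- The Lie derivative of a 1-form `α` on `ℝ^N` along a vector field `ζ`:
`(L_ζ α)(x)(v) = (Dα(x)(ζ(x)))(v) + α(x)(Dζ(x)(v))`. -/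
def lieDerivV {N : ℕ} (ζ : (Fin N → ℝ) → (Fin N → ℝ))
    (α : (Fin N → ℝ) → ((Fin N → ℝ) →L[ℝ] ℝ)) (x : Fin N → ℝ) :
    (Fin N → ℝ) →L[ℝ] ℝ :=
  fderiv ℝ α x (ζ x) + (α x).comp (fderiv ℝ ζ x)

/-- The exterior derivative of a 1-form on `ℝ^N`:
`dα(x)(u,v) = (Dα(x)u)(v) − (Dα(x)v)(u)`. -/
def extDerivV {N : ℕ} (α : (Fin N → ℝ) → ((Fin N → ℝ) →L[ℝ] ℝ)) (x u v : Fin N → ℝ) : ℝ :=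
  fderiv ℝ α x u v - fderiv ℝ α x v u

/-- The Lie bracket of vector fields on `ℝ^N`: `[X,Y](x) = DY(x)(X(x)) − DX(x)(Y(x))`. -/
def vbracketV {N : ℕ} (X Y : (Fin N → ℝ) → (Fin N → ℝ)) (x : Fin N → ℝ) : Fin N → ℝ :=
  fderiv ℝ Y x (X x) - fderiv ℝ X x (Y x)

lemma two_le_infty : (2 : WithTop ℕ∞) ≤ ∞ := by
  exact_mod_cast ENat.natCast_le_of_coe_top_le_withTop le_rfl 2

lemma one_le_infty : (1 : WithTop ℕ∞) ≤ ∞ := by exact_mod_cast le_top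

lemma infty_add_one : (∞ : WithTop ℕ∞) + 1 ≤ ∞ := by simp

/-- Main work lemma: the statement for a single 1-form `γ`. -/
lemma key_char_bundle {N : ℕ} {U : Set (Fin N → ℝ)} (hU : IsOpen U)
    {γ : (Fin N → ℝ) → ((Fin N → ℝ) →L[ℝ] ℝ)}
    {Z ζ : (Fin N → ℝ) → (Fin N → ℝ)} {f : (Fin N → ℝ) → ℝ}
    (hγ : ContDiffOn ℝ ∞ γ U) (hZ : ContDiffOn ℝ ∞ Z U)
    (hζ : ContDiffOn ℝ ∞ ζ U) (hf : ContDiffOn ℝ ∞ f U)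
    (hZker : ∀ x ∈ U, ∀ v, extDerivV γ x (Z x) v = 0)
    (hsym : ∀ x ∈ U, lieDerivV ζ γ x = fderiv ℝ f x) :
    ∀ x ∈ U, ∀ v, extDerivV γ x (vbracketV ζ Z x) v = 0 := by
  intro x hx v
  have hmem : U ∈ nhds x := hU.mem_nhds hx
  have hγx : ContDiffAt ℝ ∞ γ x := hγ.contDiffAt hmem
  have hζx : ContDiffAt ℝ ∞ ζ x := hζ.contDiffAt hmem
  have hZx : ContDiffAt ℝ ∞ Z x := hZ.contDiffAt hmem
  have hfx : ContDiffAt ℝ ∞ f x := hf.contDiffAt hmem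
  have Hγ : HasFDerivAt γ (fderiv ℝ γ x) x :=
    (hγx.differentiableAt (by simp)).hasFDerivAt
  have Hγ' : HasFDerivAt (fderiv ℝ γ) (fderiv ℝ (fderiv ℝ γ) x) x :=
    ((hγx.fderiv_right infty_add_one).differentiableAt (by simp)).hasFDerivAt
  have Hζ : HasFDerivAt ζ (fderiv ℝ ζ x) x :=
    (hζx.differentiableAt (by simp)).hasFDerivAt
  have Hζ' : HasFDerivAt (fderiv ℝ ζ) (fderiv ℝ (fderiv ℝ ζ) x) x :=
    ((hζx.fderiv_right infty_add_one).differentiableAt (by simp)).hasFDerivAt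
  have HZ : HasFDerivAt Z (fderiv ℝ Z x) x :=
    (hZx.differentiableAt (by simp)).hasFDerivAt
  have Hf' : HasFDerivAt (fderiv ℝ f) (fderiv ℝ (fderiv ℝ f) x) x :=
    ((hfx.fderiv_right infty_add_one).differentiableAt (by simp)).hasFDerivAt
  have sγ := hγx.isSymmSndFDerivAt (by rw [minSmoothness_of_isRCLikeNormedField]; exact two_le_infty)
  have sζ := hζx.isSymmSndFDerivAt (by rw [minSmoothness_of_isRCLikeNormedField]; exact two_le_infty)
  have sf := hfx.isSymmSndFDerivAt (by rw [minSmoothness_of_isRCLikeNormedField]; exact two_le_infty)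
  -- Fact 1: differentiate `i_Z dγ = 0` along `ζ x`.
  have fact1 : ∀ w : Fin N → ℝ,
      fderiv ℝ (fderiv ℝ γ) x (ζ x) (Z x) w + fderiv ℝ γ x (fderiv ℝ Z x (ζ x)) w
      - fderiv ℝ (fderiv ℝ γ) x (ζ x) w (Z x) - fderiv ℝ γ x w (fderiv ℝ Z x (ζ x)) = 0 := by
    intro w
    have h1 := (Hγ'.clm_apply HZ).clm_apply (hasFDerivAt_const w x)
    have h2 := (Hγ'.clm_apply (hasFDerivAt_const w x)).clm_apply HZ
    have hsub := h1.sub h2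
    have hev : (fun y => fderiv ℝ γ y (Z y) w - fderiv ℝ γ y w (Z y))
        =ᶠ[nhds x] (fun _ => (0 : ℝ)) := by
      filter_upwards [hmem] with y hy
      exact hZker y hy w
    have hz := (hsub.congr_of_eventuallyEq hev.symm).unique (hasFDerivAt_const (0 : ℝ) x)
    have happ := congrArg (fun (L : (Fin N → ℝ) →L[ℝ] ℝ) => L (ζ x)) hz
    simp only [ContinuousLinearMap.add_apply, ContinuousLinearMap.sub_apply,
      ContinuousLinearMap.comp_apply, ContinuousLinearMap.flip_apply,
      ContinuousLinearMap.zero_apply, ContinuousLinearMap.comp_zero, zero_add, add_zero,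
      ContinuousLinearMap.coe_comp', Function.comp] at happ
    linarith [happ]
  -- Fact 2: differentiate the Noether identity `L_ζ γ = df`.
  have fact2 : ∀ u w : Fin N → ℝ,
      fderiv ℝ (fderiv ℝ γ) x u (ζ x) w + fderiv ℝ γ x (fderiv ℝ ζ x u) w
      + fderiv ℝ γ x u (fderiv ℝ ζ x w) + γ x (fderiv ℝ (fderiv ℝ ζ) x u w)
      = fderiv ℝ (fderiv ℝ f) x u w := by
    intro u w
    have h1 := ((Hγ'.clm_apply Hζ).clm_apply (hasFDerivAt_const w x)).add
      (Hγ.clm_apply (Hζ'.clm_apply (hasFDerivAt_const w x)))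
    have h2 := Hf'.clm_apply (hasFDerivAt_const w x)
    have hev : (fun y => fderiv ℝ γ y (ζ y) w + γ y (fderiv ℝ ζ y w))
        =ᶠ[nhds x] (fun y => fderiv ℝ f y w) := by
      filter_upwards [hmem] with y hy
      have h := hsym y hy
      have h' := congrArg (fun (L : (Fin N → ℝ) →L[ℝ] ℝ) => L w) h
      simpa [lieDerivV, ContinuousLinearMap.add_apply,
        ContinuousLinearMap.comp_apply] using h'
    have hz := (h2.congr_of_eventuallyEq hev).unique h1
    have happ := congrArg (fun (L : (Fin N → ℝ) →L[ℝ] ℝ) => L u) hz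
    simp only [ContinuousLinearMap.add_apply, ContinuousLinearMap.sub_apply,
      ContinuousLinearMap.comp_apply, ContinuousLinearMap.flip_apply,
      ContinuousLinearMap.zero_apply, ContinuousLinearMap.comp_zero, zero_add, add_zero,
      ContinuousLinearMap.coe_comp', Function.comp] at happ
    linarith [happ]
  have e1 := fact1 v
  have e2 := fact2 (Z x) v
  have e3 := fact2 v (Z x)
  have sγ1 : fderiv ℝ (fderiv ℝ γ) x (Z x) (ζ x) v
      = fderiv ℝ (fderiv ℝ γ) x (ζ x) (Z x) v := by rw [sγ (Z x) (ζ x)]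
  have sγ2 : fderiv ℝ (fderiv ℝ γ) x v (ζ x) (Z x)
      = fderiv ℝ (fderiv ℝ γ) x (ζ x) v (Z x) := by rw [sγ v (ζ x)]
  have sζ1 : γ x (fderiv ℝ (fderiv ℝ ζ) x (Z x) v)
      = γ x (fderiv ℝ (fderiv ℝ ζ) x v (Z x)) := by rw [sζ (Z x) v]
  have sf1 : fderiv ℝ (fderiv ℝ f) x (Z x) v = fderiv ℝ (fderiv ℝ f) x v (Z x) :=
    sf (Z x) v
  have hker : fderiv ℝ γ x (Z x) (fderiv ℝ ζ x v)
      - fderiv ℝ γ x (fderiv ℝ ζ x v) (Z x) = 0 := hZker x hx (fderiv ℝ ζ x v)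
  simp only [extDerivV, vbracketV, map_sub, ContinuousLinearMap.sub_apply]
  linarith [e1, e2, e3, sγ1, sγ2, sζ1, sf1, hker]

/-- if `i_Z dα = 0` on `U` and `ζ` is a weak Noether symmetry
(`L_ζ(α + β) = df` on `U`, `β` closed), then the Lie bracket `[ζ, Z]` lies in the
kernel of `dα` at every point of `U`. -/
theorem bracket_in_kernel_char_bundle {N : ℕ} (hN : 1 ≤ N)
    (U : Set (Fin N → ℝ)) (hU : IsOpen U)
    (α β : (Fin N → ℝ) → ((Fin N → ℝ) →L[ℝ] ℝ))
    (Z ζ : (Fin N → ℝ) → (Fin N → ℝ)) (f : (Fin N → ℝ) → ℝ)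
    (hα : ContDiffOn ℝ ∞ α U) (hβ : ContDiffOn ℝ ∞ β U)
    (hZ : ContDiffOn ℝ ∞ Z U) (hζ : ContDiffOn ℝ ∞ ζ U) (hf : ContDiffOn ℝ ∞ f U)
    (hZker : ∀ x ∈ U, ∀ v, extDerivV α x (Z x) v = 0)
    (hβclosed : ∀ x ∈ U, ∀ u v, extDerivV β x u v = 0)
    (hsym : ∀ x ∈ U, lieDerivV ζ (fun y => α y + β y) x = fderiv ℝ f x) :
    ∀ x ∈ U, ∀ v, extDerivV α x (vbracketV ζ Z x) v = 0 := by
  have hadd : ∀ y ∈ U, ∀ u w,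
      extDerivV (fun z => α z + β z) y u w = extDerivV α y u w + extDerivV β y u w := by
    intro y hy u w
    have h1 : DifferentiableAt ℝ α y :=
      (hα.contDiffAt (hU.mem_nhds hy)).differentiableAt (by simp)
    have h2 : DifferentiableAt ℝ β y :=
      (hβ.contDiffAt (hU.mem_nhds hy)).differentiableAt (by simp)
    simp only [extDerivV, fderiv_fun_add h1 h2, ContinuousLinearMap.add_apply]
    ring
  have hker' : ∀ y ∈ U, ∀ w, extDerivV (fun z => α z + β z) y (Z y) w = 0 := by
    intro y hy w
    rw [hadd y hy, hZker y hy w, hβclosed y hy _ w]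
    ring
  intro x hx v
  have h := key_char_bundle hU (hα.add hβ) hZ hζ hf hker' hsym x hx v
  rw [hadd x hx] at h
  have hβ0 := hβclosed x hx (vbracketV ζ Z x) v
  linarith [h, hβ0]
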